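/- Let M be a right module over an associative ring R. If for every m ∈ M there exists r ∈ R with m·r = m, then for every finite list m₁,…,mₙ of elements of M there exists e ∈ R such that mᵢ·e = mᵢ for all i. -/

import Mathlib

/-- If a right module `M` over a non-unital ring `R` is right s-unital, then for any
finite list of elements there is a common right unit. -/
theorem stmt2 {R M : Type*} [NonUnitalRing R] [AddCommGroup M]
    (ρ : M → R → M)
    (hρ_add_r : ∀ m : M, ∀ r s : R, ρ m (r + s) = ρ m r + ρ m s)
    (hρ_add_m : ∀ m n : M, ∀ r : R, ρ (m + n) r = ρ m r + ρ n r)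
    (hρ_mul : ∀ m : M, ∀ r s : R, ρ m (r * s) = ρ (ρ m r) s)
    (hsu : ∀ m : M, ∃ r : R, ρ m r = m) :
    ∀ L : List M, ∃ e : R, ∀ m ∈ L, ρ m e = m := by
  have hzero : ∀ m : M, ρ m 0 = 0 := by
    intro m
    have h := hρ_add_r m 0 0
    rw [add_zero] at h
    exact right_eq_add.mp h
  have hneg : ∀ m : M, ∀ r : R, ρ m (-r) = -(ρ m r) := by
    intro m r
    have h := hρ_add_r m r (-r)
    rw [add_neg_cancel, hzero] at h
    exact eq_neg_of_add_eq_zero_left (by rw [add_comm]; exact h.symm)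
  intro L
  induction L with
  | nil => exact ⟨0, by simp⟩
  | cons m L ih =>
    obtain ⟨e, he⟩ := ih
    obtain ⟨r, hr⟩ := hsu (m - ρ m e)
    have hsub : ∀ n : M, ∀ r s : R, ρ n (r - s) = ρ n r - ρ n s := by
      intro n r s
      rw [sub_eq_add_neg, hρ_add_r, hneg, sub_eq_add_neg]
    refine ⟨e + r - e * r, ?_⟩
    intro n hn
    have hsubm : ∀ a b : M, ∀ s : R, ρ (a - b) s = ρ a s - ρ b s := by
      intro a b s
      have := hρ_add_m (a - b) b s
      rw [sub_add_cancel] at this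
      exact eq_sub_of_add_eq this.symm
    rcases List.mem_cons.mp hn with rfl | hn
    · rw [hsub, hρ_add_r, hρ_mul]
      have : ρ n r - ρ (ρ n e) r = n - ρ n e := by
        rw [← hsubm]; exact hr
      have h2 : ρ n r = n - ρ n e + ρ (ρ n e) r := by
        rw [← this]; abel
      rw [h2]; abel
    · have hne := he n hn
      rw [hsub, hρ_add_r, hρ_mul, hne]
      abel
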